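/- Both the traditional and the alternative algorithm compute the same value: for any A and digit list ds, ∑ over positions j of (A * ds[j]) * 10^j equals f A ds 0, where f A [] c = c and f A (d :: ds) c = ((A * d + c) % 10) + 10 * f A ds ((A * d + c) / 10). -/

import Mathlib

def f14 (A : ℕ) : List ℕ → ℕ → ℕ
  | [], c => c
  | d :: ds, c => (A * d + c) % 10 + 10 * f14 A ds ((A * d + c) / 10)

lemma f14_eq (A : ℕ) (ds : List ℕ) : ∀ c, f14 A ds c = A * Nat.ofDigits 10 ds + c := by
  induction ds with
  | nil => intro c; simp [f14, Nat.ofDigits]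
  | cons d ds ih =>
    intro c
    rw [f14, ih, Nat.ofDigits_cons]
    have := Nat.mod_add_div (A * d + c) 10
    ring_nf
    omega

lemma sum_eq (A : ℕ) (ds : List ℕ) :
    ∑ j ∈ Finset.range ds.length, (A * ds.getD j 0) * 10 ^ j = A * Nat.ofDigits 10 ds := by
  induction ds with
  | nil => simp [Nat.ofDigits]
  | cons d ds ih =>
    rw [Nat.ofDigits_cons, List.length_cons, Finset.sum_range_succ']
    simp only [List.getD_cons_succ, List.getD_cons_zero, pow_succ, pow_zero, one_mul]
    simp only [← mul_assoc]
    rw [← Finset.sum_mul, ih]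
    ring

theorem stmt14 (A : ℕ) (ds : List ℕ) :
    ∑ j ∈ Finset.range ds.length, (A * ds.getD j 0) * 10 ^ j = f14 A ds 0 := by
  rw [f14_eq, sum_eq, Nat.add_zero]
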